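/- For every real 0 < α < 1 and every integer n ≥ 1, with Λ_n = ∑_{k=1}^n k^α, one has (Λ_n / n^α) · log( (1 + (n+1)^α/Λ_n) · (n^α/(n+1)^α) ) ≤ 1/(α+1). Equivalently, the weights λ_k = k^α satisfy condition (5) of the paper with M = 1/(α+1). -/

import Mathlib

set_option maxHeartbeats 1000000

open Real Finset

lemma aux_odd {α : ℝ} (hα0 : 0 < α) (hα1 : α < 1) {s : ℝ} (hs0 : 0 ≤ s) (hs1 : s ≤ 1/2) :
    (1+s)^(α+1) - (1-s)^(α+1) ≤ 2*(α+1)*s := by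
  have hq1 : (1:ℝ) ≤ α + 1 := by linarith
  set F : ℝ → ℝ := fun t => 2*(α+1)*t - (1+t)^(α+1) + (1-t)^(α+1) with hF
  have hder : ∀ t : ℝ, HasDerivAt F
      (2*(α+1) - 1*(α+1)*(1+t)^(α+1-1) + (-1)*(α+1)*(1-t)^(α+1-1)) t := by
    intro t
    have h1 : HasDerivAt (fun y : ℝ => (1+y)^(α+1)) (1*(α+1)*(1+t)^(α+1-1)) t :=
      ((hasDerivAt_id t).const_add 1).rpow_const (Or.inr hq1)
    have h2 : HasDerivAt (fun y : ℝ => (1-y)^(α+1)) ((-1)*(α+1)*(1-t)^(α+1-1)) t :=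
      ((hasDerivAt_id t).const_sub 1).rpow_const (Or.inr hq1)
    have h3 : HasDerivAt (fun y : ℝ => 2*(α+1)*y) (2*(α+1)) t := by
      simpa using (hasDerivAt_id t).const_mul (2*(α+1))
    exact (h3.sub h1).add h2
  have hmono : MonotoneOn F (Set.Icc 0 (1/2)) := by
    apply monotoneOn_of_deriv_nonneg (convex_Icc _ _)
    · exact fun t _ => (hder t).continuousAt.continuousWithinAt
    · exact fun t _ => (hder t).differentiableAt.differentiableWithinAt
    · intro t ht
      rw [interior_Icc] at ht
      rw [(hder t).deriv]
      have ht0 : 0 < t := ht.1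
      have ht1 : t < 1/2 := ht.2
      have e : α + 1 - 1 = α := by ring
      rw [e]
      have hb1 : (1+t)^α ≤ 1 + α*t :=
        rpow_one_add_le_one_add_mul_self (by linarith) hα0.le hα1.le
      have hb2 : (1-t)^α ≤ 1 - α*t := by
        have := rpow_one_add_le_one_add_mul_self (show (-1:ℝ) ≤ -t by linarith) hα0.le hα1.le
        rw [show (1:ℝ) + -t = 1 - t by ring] at this
        linarith [this]
      nlinarith [hb1, hb2]
  have h0 : F 0 ≤ F s := hmono (Set.mem_Icc.2 ⟨le_refl _, by norm_num⟩)
    (Set.mem_Icc.2 ⟨hs0, hs1⟩) hs0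
  have hF0 : F 0 = 0 := by
    simp [hF, Real.one_rpow]
  rw [hF0] at h0
  simp only [hF] at h0
  linarith

lemma aux_mid {α : ℝ} (hα0 : 0 < α) (hα1 : α < 1) {u : ℝ} (hu0 : 0 ≤ u) (hu1 : u ≤ 1/2) :
    2*α*u ≤ (1-u)^(-α) - (1+u)^(-α) := by
  set G : ℝ → ℝ := fun t => (1-t)^(-α) - (1+t)^(-α) - 2*α*t with hG
  have hder : ∀ t ∈ Set.Icc (0:ℝ) (1/2), HasDerivAt G
      ((-1)*(-α)*(1-t)^(-α-1) - 1*(-α)*(1+t)^(-α-1) - 2*α) t := by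
    intro t ht
    have ht1 : 1 - t ≠ 0 := by
      have := ht.2; intro h; rw [sub_eq_zero] at h; rw [← h] at this; norm_num at this
    have h1 : HasDerivAt (fun y : ℝ => (1-y)^(-α)) ((-1)*(-α)*(1-t)^(-α-1)) t :=
      ((hasDerivAt_id t).const_sub 1).rpow_const (Or.inl ht1)
    have h2 : HasDerivAt (fun y : ℝ => (1+y)^(-α)) (1*(-α)*(1+t)^(-α-1)) t := by
      have ht2 : 1 + t ≠ 0 := by have := ht.1; intro h; nlinarith
      exact ((hasDerivAt_id t).const_add 1).rpow_const (Or.inl ht2)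
    have h3 : HasDerivAt (fun y : ℝ => 2*α*y) (2*α) t := by
      simpa using (hasDerivAt_id t).const_mul (2*α)
    exact (h1.sub h2).sub h3
  have hmono : MonotoneOn G (Set.Icc 0 (1/2)) := by
    apply monotoneOn_of_deriv_nonneg (convex_Icc _ _)
    · exact fun t ht => (hder t ht).continuousAt.continuousWithinAt
    · intro t ht
      rw [interior_Icc] at ht
      exact (hder t ⟨ht.1.le, ht.2.le⟩).differentiableAt.differentiableWithinAt
    · intro t ht
      rw [interior_Icc] at ht
      obtain ⟨ht0, ht1⟩ := ht
      rw [(hder t ⟨ht0.le, ht1.le⟩).deriv]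
      have hm : (0:ℝ) < 1 - t := by linarith
      have hp : (0:ℝ) < 1 + t := by linarith
      set a := (1-t)^(-α-1) with ha'
      set b := (1+t)^(-α-1) with hb'
      have ha : 0 < a := rpow_pos_of_pos hm _
      have hb : 0 < b := rpow_pos_of_pos hp _
      have hab : 1 ≤ a * b := by
        rw [ha', hb', ← Real.mul_rpow hm.le hp.le]
        apply Real.one_le_rpow_of_pos_of_le_one_of_nonpos
        · nlinarith
        · nlinarith
        · linarith
      have hsum : 2 ≤ a + b := by nlinarith [sq_nonneg (a - b)]
      nlinarith [hsum]
  have h0 : G 0 ≤ G u := hmono (Set.mem_Icc.2 ⟨le_refl _, by norm_num⟩)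
    (Set.mem_Icc.2 ⟨hu0, hu1⟩) hu0
  have hG0 : G 0 = 0 := by simp [hG, Real.one_rpow]
  rw [hG0] at h0
  simp only [hG] at h0
  linarith

lemma term_low {α : ℝ} (hα0 : 0 < α) (hα1 : α < 1) {y : ℝ} (hy : 1 ≤ y) :
    (y+1/2)^(α+1) - (y-1/2)^(α+1) ≤ (α+1) * y^α := by
  have hy0 : (0:ℝ) < y := by linarith
  set s := 1/(2*y) with hs
  have hs0 : 0 ≤ s := by positivity
  have hs1 : s ≤ 1/2 := by
    rw [hs, div_le_div_iff₀ (by linarith) (by norm_num)]; linarith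
  have e1 : y + 1/2 = y*(1+s) := by rw [hs]; field_simp
  have e2 : y - 1/2 = y*(1-s) := by rw [hs]; field_simp
  have f1 : (y+1/2)^(α+1) = y^(α+1) * (1+s)^(α+1) := by
    rw [e1, Real.mul_rpow hy0.le (by linarith)]
  have f2 : (y-1/2)^(α+1) = y^(α+1) * (1-s)^(α+1) := by
    rw [e2, Real.mul_rpow hy0.le (by linarith)]
  have hodd := aux_odd hα0 hα1 hs0 hs1
  have hyq : y^(α+1) = y^α * y := Real.rpow_add_one hy0.ne' α
  have hyqpos : (0:ℝ) < y^(α+1) := rpow_pos_of_pos hy0 _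
  calc (y+1/2)^(α+1) - (y-1/2)^(α+1) = y^(α+1) * ((1+s)^(α+1) - (1-s)^(α+1)) := by
        rw [f1, f2]; ring
    _ ≤ y^(α+1) * (2*(α+1)*s) := by
        apply mul_le_mul_of_nonneg_left hodd hyqpos.le
    _ = (α+1) * y^α := by rw [hyq, hs]; field_simp

lemma term_up {α : ℝ} (hα0 : 0 < α) (hα1 : α < 1) {y : ℝ} (hy : 1 ≤ y) :
    (α+1) * y^α ≤ (y+1)^(α+1) - y^(α+1) := by
  have hy0 : (0:ℝ) < y := by linarith
  have hb : 1 + (α+1)*(1/y) ≤ (1+1/y)^(α+1) :=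
    one_add_mul_self_le_rpow_one_add (le_trans (by norm_num : (-1:ℝ) ≤ 0) (by positivity)) (by linarith)
  have e : (y+1)^(α+1) = y^(α+1) * (1+1/y)^(α+1) := by
    rw [← Real.mul_rpow hy0.le (by positivity)]
    congr 1; field_simp
  have hyq : y^(α+1) = y^α * y := Real.rpow_add_one hy0.ne' α
  have hyqpos : (0:ℝ) < y^(α+1) := rpow_pos_of_pos hy0 _
  have h2 : y^(α+1) * (1 + (α+1)*(1/y)) ≤ (y+1)^(α+1) := by
    rw [e]; exact mul_le_mul_of_nonneg_left hb hyqpos.le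
  have e2 : y^(α+1) * (1 + (α+1)*(1/y)) = y^(α+1) + (α+1)*y^α := by
    rw [hyq]; field_simp
  linarith [h2, e2.symm.le]

lemma sum_low {α : ℝ} (hα0 : 0 < α) (hα1 : α < 1) (n : ℕ) :
    (((n:ℝ)+1/2)^(α+1) - ((2:ℝ))⁻¹^(α+1))/(α+1) ≤ ∑ k ∈ Finset.Icc 1 n, (k:ℝ)^α := by
  induction n with
  | zero => simp
  | succ m ih =>
    rw [← Finset.insert_Icc_right_eq_Icc_add_one (by omega), Finset.sum_insert (by simp)]
    have hterm := term_low hα0 hα1 (show (1:ℝ) ≤ (m:ℝ)+1 by push_cast; linarith [Nat.cast_nonneg (α := ℝ) m])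
    push_cast
    have e : ((m:ℝ)+1) - 1/2 = (m:ℝ) + 1/2 := by ring
    rw [e] at hterm
    have hq0 : (0:ℝ) < α+1 := by linarith
    rw [div_le_iff₀ hq0] at ih ⊢
    push_cast at ih
    nlinarith [hterm, ih]

lemma sum_up {α : ℝ} (hα0 : 0 < α) (hα1 : α < 1) (n : ℕ) :
    ∑ k ∈ Finset.Icc 1 n, (k:ℝ)^α ≤ (((n:ℝ)+1)^(α+1) - 1)/(α+1) := by
  induction n with
  | zero => simp [Real.one_rpow]
  | succ m ih =>
    rw [← Finset.insert_Icc_right_eq_Icc_add_one (by omega), Finset.sum_insert (by simp)]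
    have hterm := term_up hα0 hα1 (show (1:ℝ) ≤ (m:ℝ)+1 by linarith [Nat.cast_nonneg (α := ℝ) m])
    push_cast
    have hq0 : (0:ℝ) < α+1 := by linarith
    rw [le_div_iff₀ hq0] at ih ⊢
    push_cast at ih
    nlinarith [hterm, ih]

/-- Inequality (3.1): the weights `λ_k = k^α` satisfy condition (5) with
`M = 1/(α+1)`, i.e. `(Λ_n/n^α) log((1 + (n+1)^α/Λ_n)(n^α/(n+1)^α)) ≤ 1/(α+1)`. -/
theorem condition_five_for_powers (α : ℝ) (hα0 : 0 < α) (hα1 : α < 1)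
    (n : ℕ) (hn : 1 ≤ n)
    (Lam : ℕ → ℝ) (hLam : ∀ m, Lam m = ∑ k ∈ Finset.Icc 1 m, (k : ℝ) ^ α) :
    (Lam n / (n : ℝ) ^ α) *
      Real.log ((1 + ((n : ℝ) + 1) ^ α / Lam n) * ((n : ℝ) ^ α / ((n : ℝ) + 1) ^ α)) ≤
      1 / (α + 1) := by
  have hq0 : (0:ℝ) < α + 1 := by linarith
  have hx1 : (1:ℝ) ≤ (n:ℝ) := by exact_mod_cast hn
  set x : ℝ := (n:ℝ) with hxdef
  have hx0 : (0:ℝ) < x := by linarith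
  set L : ℝ := Lam n with hLdef
  have hm0 : (0:ℝ) < x + 1/2 := by linarith
  have hx10 : (0:ℝ) < x + 1 := by linarith
  have hxa : (0:ℝ) < x^α := rpow_pos_of_pos hx0 α
  have hc : (0:ℝ) < (x+1)^α := rpow_pos_of_pos hx10 α
  have hW : (0:ℝ) < (x+1/2)^(α+1) := rpow_pos_of_pos hm0 _
  have hV : (0:ℝ) < ((2:ℝ))⁻¹^(α+1) := rpow_pos_of_pos (by norm_num) _
  have hXq : (0:ℝ) < (x+1)^(α+1) := rpow_pos_of_pos hx10 _
  have hVW : ((2:ℝ))⁻¹^(α+1) < (x+1/2)^(α+1) :=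
    Real.rpow_lt_rpow (by norm_num) (by norm_num; linarith) hq0
  have hLlow : ((x+1/2)^(α+1) - ((2:ℝ))⁻¹^(α+1))/(α+1) ≤ L := by
    rw [hLdef, hLam n]; exact sum_low hα0 hα1 n
  have hLpos : (0:ℝ) < L := lt_of_lt_of_le (div_pos (by linarith) hq0) hLlow
  have hLup : L ≤ (x+1)^(α+1)/(α+1) := by
    have hsum : L ≤ ((x+1)^(α+1) - 1)/(α+1) := by
      rw [hLdef, hLam n]; exact sum_up hα0 hα1 n
    have h2 : ((x+1)^(α+1) - 1)/(α+1) ≤ (x+1)^(α+1)/(α+1) := by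
      rw [div_le_div_iff₀ hq0 hq0]; nlinarith
    linarith
  -- step: midpoint bound for the difference of reciprocals
  have hu0' : (0:ℝ) < 2*x+1 := by linarith
  set u : ℝ := 1/(2*x+1) with hudef
  have hu0 : (0:ℝ) ≤ u := by positivity
  have hu1 : u ≤ 1/2 := by rw [hudef, div_le_div_iff₀ hu0' (by norm_num)]; linarith
  have h1u : (0:ℝ) < 1 - u := by linarith
  have h1u' : (0:ℝ) < 1 + u := by linarith
  have hmid := aux_mid hα0 hα1 hu0 hu1
  have ex : x^α = (x+1/2)^α * (1-u)^α := by
    rw [← Real.mul_rpow hm0.le h1u.le]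
    congr 1
    rw [hudef]; field_simp; ring
  have ec : (x+1)^α = (x+1/2)^α * (1+u)^α := by
    rw [← Real.mul_rpow hm0.le h1u'.le]
    congr 1
    rw [hudef]; field_simp; ring
  have hma : (0:ℝ) < (x+1/2)^α := rpow_pos_of_pos hm0 α
  have h1ua : (0:ℝ) < (1-u)^α := rpow_pos_of_pos h1u α
  have h1ua' : (0:ℝ) < (1+u)^α := rpow_pos_of_pos h1u' α
  have hru1 : (1-u)^(-α) = ((1-u)^α)⁻¹ := Real.rpow_neg h1u.le α
  have hru2 : (1+u)^(-α) = ((1+u)^α)⁻¹ := Real.rpow_neg h1u'.le α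
  have hD : α/((x+1/2)^(α+1)) ≤ 1/x^α - 1/(x+1)^α := by
    have e1 : 1/x^α - 1/(x+1)^α = ((1-u)^(-α) - (1+u)^(-α)) * (1/(x+1/2)^α) := by
      rw [ex, ec, hru1, hru2]; field_simp
    have e2 : α/((x+1/2)^(α+1)) = (2*α*u) * (1/(x+1/2)^α) := by
      rw [Real.rpow_add_one hm0.ne', hudef]; field_simp
    rw [e1, e2]
    exact mul_le_mul_of_nonneg_right hmid (by positivity)
  -- core comparison
  have hsplit : (x+1/2)^(α+1) = (2*x+1)^(α+1) * ((2:ℝ))⁻¹^(α+1) := by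
    rw [← Real.mul_rpow hu0'.le (by norm_num)]
    congr 1; ring
  have h2xq : (0:ℝ) < (2*x+1)^(α+1) := rpow_pos_of_pos hu0' _
  have hCORE : 2*α*(x+1)^(α+1) ≤ x^α*(2*x+1)^(α+1) := by
    have hr : (3:ℝ)/2 ≤ (2*x+1)/(x+1) := by
      rw [div_le_div_iff₀ (by norm_num) hx10]; linarith
    have e3 : (2*x+1)^(α+1) = (x+1)^(α+1) * ((2*x+1)/(x+1))^(α+1) := by
      rw [← Real.mul_rpow hx10.le (by positivity)]
      congr 1; field_simp
    have h32 : 2*α ≤ ((3:ℝ)/2)^(α+1) := by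
      rcases le_or_gt α (3/4) with h | h
      · calc 2*α ≤ 3/2 := by linarith
          _ = ((3:ℝ)/2)^(1:ℝ) := (Real.rpow_one _).symm
          _ ≤ ((3:ℝ)/2)^(α+1) := Real.rpow_le_rpow_of_exponent_le (by norm_num) (by linarith)
      · have h74 : ((3:ℝ)/2)^((7:ℝ)/4) ≤ ((3:ℝ)/2)^(α+1) :=
          Real.rpow_le_rpow_of_exponent_le (by norm_num) (by linarith)
        have h2 : (2:ℝ) ≤ ((3:ℝ)/2)^((7:ℝ)/4) := by
          have hb : (0:ℝ) ≤ ((3:ℝ)/2)^((7:ℝ)/4) := (rpow_pos_of_pos (by norm_num) _).le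
          refine le_of_pow_le_pow_left₀ (n := 4) (by norm_num) hb ?_
          have e : (((3:ℝ)/2)^((7:ℝ)/4))^(4:ℕ) = ((3:ℝ)/2)^(7:ℕ) := by
            rw [← Real.rpow_natCast (((3:ℝ)/2)^((7:ℝ)/4)) 4, ← Real.rpow_mul (by norm_num),
                show (7:ℝ)/4*((4:ℕ):ℝ) = ((7:ℕ):ℝ) by norm_num, Real.rpow_natCast]
          rw [e]; norm_num
        linarith
    have hxge1 : (1:ℝ) ≤ x^α := by
      calc (1:ℝ) = (1:ℝ)^α := (Real.one_rpow α).symm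
        _ ≤ x^α := Real.rpow_le_rpow (by norm_num) hx1 hα0.le
    have hrq : ((3:ℝ)/2)^(α+1) ≤ ((2*x+1)/(x+1))^(α+1) :=
      Real.rpow_le_rpow (by norm_num) hr hq0.le
    calc 2*α*(x+1)^(α+1) ≤ ((3:ℝ)/2)^(α+1)*(x+1)^(α+1) :=
          mul_le_mul_of_nonneg_right h32 hXq.le
      _ ≤ ((2*x+1)/(x+1))^(α+1)*(x+1)^(α+1) := mul_le_mul_of_nonneg_right hrq hXq.le
      _ ≤ x^α * (((2*x+1)/(x+1))^(α+1)*(x+1)^(α+1)) := le_mul_of_one_le_left (by positivity) hxge1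
      _ = x^α*(2*x+1)^(α+1) := by rw [e3]; ring
  -- assemble the key inequality
  have hLD : (α/(α+1))*(1 - ((2:ℝ))⁻¹^(α+1)/(x+1/2)^(α+1)) ≤ L*(1/x^α - 1/(x+1)^α) := by
    have hL0D : ((x+1/2)^(α+1) - ((2:ℝ))⁻¹^(α+1))/(α+1) * (α/((x+1/2)^(α+1)))
        = (α/(α+1))*(1 - ((2:ℝ))⁻¹^(α+1)/(x+1/2)^(α+1)) := by
      field_simp
    rw [← hL0D]
    exact mul_le_mul hLlow hD (by positivity) hLpos.le
  have hKb : x^α/(2*(α+1)^2*((x+1)^(α+1)/(α+1))) ≤ x^α/(2*(α+1)^2*L) := by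
    gcongr
  have hcore : (α/(α+1))*(((2:ℝ))⁻¹^(α+1)/(x+1/2)^(α+1)) ≤ x^α/(2*(α+1)^2*((x+1)^(α+1)/(α+1))) := by
    have eR : x^α/(2*(α+1)^2*((x+1)^(α+1)/(α+1))) = x^α/(2*(α+1)*(x+1)^(α+1)) := by
      rw [eq_div_iff (by positivity)]; field_simp
    have eL : (α/(α+1))*(((2:ℝ))⁻¹^(α+1)/(x+1/2)^(α+1)) = α/((α+1)*(2*x+1)^(α+1)) := by
      rw [hsplit]; field_simp
    rw [eR, eL, div_le_div_iff₀ (by positivity) (by positivity)]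
    nlinarith [hCORE, hq0]
  have key : α/(α+1) ≤ L/x^α - L/(x+1)^α + x^α/(2*(α+1)^2*L) := by
    have e : L*(1/x^α - 1/(x+1)^α) = L/x^α - L/(x+1)^α := by ring
    have expand : (α/(α+1))*(1 - ((2:ℝ))⁻¹^(α+1)/(x+1/2)^(α+1))
        = α/(α+1) - (α/(α+1))*(((2:ℝ))⁻¹^(α+1)/(x+1/2)^(α+1)) := by ring
    rw [e] at hLD
    rw [expand] at hLD
    linarith [hLD, hKb, hcore]
  -- endgame
  have hA : (0:ℝ) < L/x^α := div_pos hLpos hxa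
  have ht0 : (0:ℝ) ≤ x^α/((α+1)*L) := by positivity
  have hexp := Real.quadratic_le_exp_of_nonneg ht0
  have hP : (1 + (x+1)^α/L)*(x^α/(x+1)^α) ≤ 1 + x^α/((α+1)*L) + (x^α/((α+1)*L))^2/2 := by
    rw [← sub_nonneg]
    have hE : 1 + x^α/((α+1)*L) + (x^α/((α+1)*L))^2/2 - (1 + (x+1)^α/L)*(x^α/(x+1)^α)
        = (x^α/L) * ((L/x^α - L/(x+1)^α + x^α/(2*(α+1)^2*L)) - α/(α+1)) := by
      field_simp; ring
    rw [hE]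
    exact mul_nonneg (by positivity) (by linarith [key])
  have hPpos : (0:ℝ) < (1 + (x+1)^α/L)*(x^α/(x+1)^α) := by positivity
  have hlog : Real.log ((1 + (x+1)^α/L)*(x^α/(x+1)^α)) ≤ x^α/((α+1)*L) := by
    calc Real.log ((1 + (x+1)^α/L)*(x^α/(x+1)^α))
        ≤ Real.log (Real.exp (x^α/((α+1)*L))) := by
          rw [Real.log_le_log_iff hPpos (Real.exp_pos _)]
          exact le_trans hP hexp
      _ = x^α/((α+1)*L) := Real.log_exp _
  calc L/x^α * Real.log ((1 + (x+1)^α/L)*(x^α/(x+1)^α))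
      ≤ L/x^α * (x^α/((α+1)*L)) := mul_le_mul_of_nonneg_left hlog hA.le
    _ = 1/(α+1) := by field_simp
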